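/- Fix a sign ∈ {+,−}. For every Schwartz function ψ : ℝ → ℂ and every k ∈ ℕ: the function σ ↦ σ^k · ∫_ℝ e^{±iσx} ψ(x) dx is integrable on (0,∞), the limit L_±^{(k+1)}(ψ) exists, and ∫₀^∞ σ^k · ( ∫_ℝ e^{±iσx} ψ(x) dx ) dσ = (±i)^{k+1} · k! · L_±^{(k+1)}(ψ). -/

import Mathlib

open Real Filter Topology MeasureTheory

namespace HeavisideAux

open Set Complex

lemma intOn_pow_exp (k : ℕ) (z : ℂ) (hz : 0 < z.re) :
    IntegrableOn (fun σ : ℝ => (σ : ℂ) ^ k * Complex.exp (-(z * σ))) (Set.Ioi 0) := by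
  have hg : IntegrableOn (fun x : ℝ => x ^ (k:ℝ) * Real.exp (-z.re * x ^ (1:ℝ))) (Set.Ioi 0) :=
    integrableOn_rpow_mul_exp_neg_mul_rpow
      (by exact_mod_cast neg_one_lt_zero.trans_le (Nat.cast_nonneg k)) zero_lt_one hz
  refine Integrable.mono' hg ?_ ?_
  · exact (Continuous.aestronglyMeasurable
      ((Complex.continuous_ofReal.pow k).mul
        (Complex.continuous_exp.comp (continuous_const.mul Complex.continuous_ofReal).neg)))
  · filter_upwards [ae_restrict_mem measurableSet_Ioi] with σ hσ
    have hσ0 : (0:ℝ) < σ := hσ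
    rw [norm_mul, norm_pow]
    simp only [Complex.norm_exp, Complex.norm_real, Real.norm_eq_abs]
    rw [abs_of_pos hσ0, Real.rpow_natCast, Real.rpow_one]
    apply le_of_eq
    congr 1
    simp [Complex.mul_re]

lemma hasDeriv_exp_aux (z : ℂ) (σ : ℝ) :
    HasDerivAt (fun t : ℝ => Complex.exp (-(z * t))) (-z * Complex.exp (-(z * σ))) σ := by
  have h1 : HasDerivAt (fun w : ℂ => Complex.exp (-(z * w))) (-z * Complex.exp (-(z * σ))) (σ:ℂ) := by
    have := (((hasDerivAt_id ((σ:ℝ):ℂ)).const_mul z).neg).cexp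
    simpa [mul_comm] using this
  exact h1.comp_ofReal

lemma tendsto_pow_exp_aux (n : ℕ) (z : ℂ) (hz : 0 < z.re) :
    Tendsto (fun σ : ℝ => (σ:ℂ) ^ n * Complex.exp (-(z * σ))) atTop (𝓝 0) := by
  rw [tendsto_zero_iff_norm_tendsto_zero]
  have h1 : Tendsto (fun σ : ℝ => (z.re * σ) ^ n * Real.exp (-(z.re * σ))) atTop (𝓝 0) :=
    (tendsto_pow_mul_exp_neg_atTop_nhds_zero n).comp (tendsto_id.const_mul_atTop hz)
  have h2 : Tendsto (fun σ : ℝ => (z.re⁻¹) ^ n * ((z.re * σ) ^ n * Real.exp (-(z.re * σ))))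
      atTop (𝓝 0) := by simpa using h1.const_mul ((z.re⁻¹) ^ n)
  refine h2.congr' ?_
  filter_upwards [eventually_gt_atTop (0:ℝ)] with σ hσ
  rw [norm_mul, norm_pow]
  simp only [Complex.norm_exp, Complex.norm_real, Real.norm_eq_abs]
  have hre : (-(z * (σ:ℂ))).re = -(z.re * σ) := by simp [Complex.mul_re]
  rw [abs_of_pos hσ, hre, ← mul_assoc, ← mul_pow, inv_mul_cancel_left₀ (ne_of_gt hz)]

lemma integral_pow_exp (k : ℕ) (z : ℂ) (hz : 0 < z.re) :
    ∫ σ in Set.Ioi (0:ℝ), (σ : ℂ) ^ k * Complex.exp (-(z * σ))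
      = (k.factorial : ℂ) / z ^ (k + 1) := by
  have hz0 : z ≠ 0 := fun h => by simp [h] at hz
  induction k with
  | zero =>
    have hderiv : ∀ x ∈ Set.Ici (0:ℝ),
        HasDerivAt (fun σ : ℝ => -Complex.exp (-(z * σ)) / z) (Complex.exp (-(z * x))) x := by
      intro x _
      have h := ((hasDeriv_exp_aux z x).neg).div_const z
      have : -(-z * Complex.exp (-(z * x))) / z = Complex.exp (-(z * x)) := by
        field_simp
      rwa [this] at h
    have hint : IntegrableOn (fun σ : ℝ => Complex.exp (-(z * σ))) (Set.Ioi 0) := by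
      simpa using intOn_pow_exp 0 z hz
    have htop : Tendsto (fun σ : ℝ => -Complex.exp (-(z * σ)) / z) atTop (𝓝 0) := by
      have := ((tendsto_pow_exp_aux 0 z hz).neg).div_const z
      simpa using this
    have key := integral_Ioi_of_hasDerivAt_of_tendsto' hderiv hint htop
    simp only [pow_zero, one_mul]
    rw [key]
    simp only [Complex.ofReal_zero, mul_zero, neg_zero, Complex.exp_zero, Nat.factorial_zero,
      Nat.cast_one, pow_one]
    ring
  | succ k ih =>
    have hderiv : ∀ x ∈ Set.Ici (0:ℝ),
        HasDerivAt (fun σ : ℝ => -((σ:ℂ) ^ (k+1) * Complex.exp (-(z * σ))) / z)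
          ((x:ℂ) ^ (k+1) * Complex.exp (-(z * x))
            - (((k:ℂ)+1)/z) * ((x:ℂ) ^ k * Complex.exp (-(z * x)))) x := by
      intro x _
      have hpow : HasDerivAt (fun σ : ℝ => (σ:ℂ) ^ (k+1)) (((k:ℂ)+1) * (x:ℂ) ^ k) x := by
        have := (hasDerivAt_pow (k+1) ((x:ℝ):ℂ)).comp_ofReal
        simpa using this
      have h := ((hpow.mul (hasDeriv_exp_aux z x)).neg).div_const z
      have heq : -(((k:ℂ)+1) * (x:ℂ) ^ k * Complex.exp (-(z * x))
            + (x:ℂ) ^ (k+1) * (-z * Complex.exp (-(z * x)))) / z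
          = (x:ℂ) ^ (k+1) * Complex.exp (-(z * x))
            - (((k:ℂ)+1)/z) * ((x:ℂ) ^ k * Complex.exp (-(z * x))) := by
        field_simp
        ring
      rwa [heq] at h
    have hint : IntegrableOn (fun σ : ℝ =>
        (σ:ℂ) ^ (k+1) * Complex.exp (-(z * σ))
          - (((k:ℂ)+1)/z) * ((σ:ℂ) ^ k * Complex.exp (-(z * σ)))) (Set.Ioi 0) :=
      (intOn_pow_exp (k+1) z hz).sub ((intOn_pow_exp k z hz).const_mul _)
    have htop : Tendsto (fun σ : ℝ => -((σ:ℂ) ^ (k+1) * Complex.exp (-(z * σ))) / z)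
        atTop (𝓝 0) := by
      have := ((tendsto_pow_exp_aux (k+1) z hz).neg).div_const z
      simpa using this
    have key := integral_Ioi_of_hasDerivAt_of_tendsto' hderiv hint htop
    rw [integral_sub (intOn_pow_exp (k+1) z hz) ((intOn_pow_exp k z hz).const_mul _),
      integral_const_mul, ih] at key
    have h0 : -((((0:ℝ)):ℂ) ^ (k+1) * Complex.exp (-(z * ((0:ℝ):ℂ)))) / z = 0 := by
      simp
    rw [h0] at key
    have hA : ∫ σ in Set.Ioi (0:ℝ), (σ:ℂ) ^ (k+1) * Complex.exp (-(z * σ))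
        = (((k:ℂ)+1)/z) * ((k.factorial : ℂ) / z ^ (k+1)) :=
      sub_eq_zero.mp (by simpa using key)
    rw [hA, Nat.factorial_succ]
    push_cast
    rw [div_mul_div_comm, ← pow_succ']

end HeavisideAux

open HeavisideAux in
/-- for a Schwartz function `ψ`, a sign `s ∈ {+1,−1}` and `k ∈ ℕ`, the
function `σ ↦ σ^k ∫ e^{±iσx} ψ(x) dx` is integrable on `(0,∞)`, the principal-value
limit `L_±^{(k+1)}(ψ)` exists, and
`∫₀^∞ σ^k (∫ e^{±iσx} ψ(x) dx) dσ = (±i)^{k+1}·k!·L_±^{(k+1)}(ψ)`. -/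
theorem heaviside_fourier_identity
    (s : ℝ) (hs : s = 1 ∨ s = -1) (ψ : SchwartzMap ℝ ℂ) (k : ℕ) :
    IntegrableOn
      (fun σ : ℝ => (σ : ℂ) ^ k *
        ∫ x : ℝ, Complex.exp (((s * σ * x : ℝ) : ℂ) * Complex.I) * ψ x)
      (Set.Ioi 0) ∧
    ∃ L : ℂ,
      Tendsto (fun ε : ℝ =>
          ∫ x : ℝ, ψ x * ((x : ℂ) + ((s * ε : ℝ) : ℂ) * Complex.I)⁻¹ ^ (k + 1))
        (𝓝[>] 0) (𝓝 L) ∧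
      (∫ σ in Set.Ioi (0 : ℝ), (σ : ℂ) ^ k *
          ∫ x : ℝ, Complex.exp (((s * σ * x : ℝ) : ℂ) * Complex.I) * ψ x)
        = ((s : ℂ) * Complex.I) ^ (k + 1) * (k.factorial : ℂ) * L := by
  have hπ : (π : ℝ) ≠ 0 := Real.pi_ne_zero
  have hsne : s ≠ 0 := by rcases hs with h | h <;> simp [h]
  have hs2 : (s : ℂ) * (s : ℂ) = 1 := by rcases hs with h | h <;> norm_num [h]
  set c : ℂ := (s : ℂ) * Complex.I with hc
  have hc1 : (-c) * c = 1 := by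
    rw [hc]
    linear_combination hs2 + (-(s:ℂ) * (s:ℂ)) * Complex.I_mul_I
  have hcne : c ≠ 0 := by
    intro h; rw [h, mul_zero] at hc1; exact zero_ne_one hc1
  have hCne : c ^ (k+1) * (k.factorial : ℂ) ≠ 0 :=
    mul_ne_zero (pow_ne_zero _ hcne) (Nat.cast_ne_zero.mpr k.factorial_ne_zero)
  set J : ℝ → ℂ := fun σ => ∫ x : ℝ, Complex.exp (((s * σ * x : ℝ) : ℂ) * Complex.I) * ψ x
    with hJ
  have hJa : ∀ σ : ℝ, (∫ x : ℝ, Complex.exp (((s * σ * x : ℝ) : ℂ) * Complex.I) * ψ x) = J σ :=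
    fun σ => by rw [hJ]
  simp only [hJa]
  set φ := SchwartzMap.fourierTransformCLM ℂ ψ with hφ
  set c₀ : ℝ := -s / (2 * π) with hc₀
  have hc₀ne : c₀ ≠ 0 := by
    rw [hc₀]; exact div_ne_zero (neg_ne_zero.mpr hsne) (by positivity)
  -- identify J with the Fourier transform
  have hJf : ∀ σ : ℝ, J σ = φ (c₀ * σ) := by
    intro σ
    rw [hJ]
    have h1 : ∀ v : ℝ, Complex.exp (((s * σ * v : ℝ) : ℂ) * Complex.I) * ψ v
        = Complex.exp (((-2 * π * v * (c₀ * σ) : ℝ) : ℂ) * Complex.I) • ψ v := by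
      intro v
      rw [smul_eq_mul]
      have hv : (-2 * π * v * (c₀ * σ) : ℝ) = s * σ * v := by
        rw [hc₀]; field_simp
      rw [hv]
    simp only [h1]
    rw [← Real.fourier_real_eq_integral_exp_smul]
    rfl
  have hJcont : Continuous J := by
    have : J = fun σ => φ (c₀ * σ) := funext hJf
    rw [this]
    exact φ.continuous.comp (continuous_const.mul continuous_id)
  -- integrability of σ^k * J σ
  have hφint : Integrable (fun u : ℝ => (u : ℂ) ^ k * φ u) := by
    refine (φ.integrable_pow_mul volume k).mono' ?_ ?_
    · exact ((Complex.continuous_ofReal.pow k).mul φ.continuous).aestronglyMeasurable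
    · filter_upwards with u
      rw [norm_mul, norm_pow, Complex.norm_real]
  have h1 : Integrable (fun σ : ℝ => ((c₀ * σ : ℝ) : ℂ) ^ k * φ (c₀ * σ)) :=
    hφint.comp_mul_left' hc₀ne
  have h2 : Integrable (fun σ : ℝ => (σ : ℂ) ^ k * φ (c₀ * σ)) := by
    have h3 := h1.const_mul ((((c₀ : ℝ) : ℂ)) ^ k)⁻¹
    refine h3.congr (Filter.Eventually.of_forall fun σ => ?_)
    push_cast
    rw [mul_pow, mul_assoc, inv_mul_cancel_left₀
      (pow_ne_zero k ((Complex.ofReal_ne_zero).mpr hc₀ne))]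
  have hJint : IntegrableOn (fun σ : ℝ => (σ : ℂ) ^ k * J σ) (Set.Ioi 0) := by
    refine (h2.congr (Filter.Eventually.of_forall fun σ => ?_)).integrableOn
    rw [hJf σ]
  -- the key Fubini computation
  have key : ∀ ε : ℝ, 0 < ε →
      (∫ σ in Set.Ioi (0:ℝ), ((σ:ℂ) ^ k * Complex.exp (-((ε:ℂ) * σ))) * J σ)
        = c ^ (k+1) * (k.factorial : ℂ) *
          ∫ x : ℝ, ψ x * ((x : ℂ) + ((s * ε : ℝ) : ℂ) * Complex.I)⁻¹ ^ (k + 1) := by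
    intro ε hε
    have hεre : (0:ℝ) < ((ε:ℂ)).re := by simpa using hε
    have hapos : ∀ x : ℝ, 0 < (((ε:ℂ) - (s:ℂ) * Complex.I * x)).re := by
      intro x
      have : (((ε:ℂ) - (s:ℂ) * Complex.I * x)).re = ε := by simp [Complex.mul_re]
      rw [this]; exact hε
    have hInt : Integrable (Function.uncurry fun (σ : ℝ) (x : ℝ) =>
        ((σ:ℂ) ^ k * Complex.exp (-((ε:ℂ) * σ))) *
          (Complex.exp (((s * σ * x : ℝ) : ℂ) * Complex.I) * ψ x))
        ((volume.restrict (Set.Ioi 0)).prod volume) := by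
      have hg := Integrable.mul_prod ((intOn_pow_exp k (ε:ℂ) hεre).norm) ((ψ.integrable (μ := volume)).norm)
      refine hg.mono' ?_ ?_
      · apply Continuous.aestronglyMeasurable
        apply Continuous.mul
        · exact ((Complex.continuous_ofReal.comp continuous_fst).pow k).mul
            (Complex.continuous_exp.comp
              ((continuous_const.mul (Complex.continuous_ofReal.comp continuous_fst)).neg))
        · exact (Complex.continuous_exp.comp
            ((Complex.continuous_ofReal.comp
              ((continuous_const.mul continuous_fst).mul continuous_snd)).mul
                continuous_const)).mul (ψ.continuous.comp continuous_snd)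
      · filter_upwards with p
        have h1 : ‖Complex.exp (((s * p.1 * p.2 : ℝ) : ℂ) * Complex.I)‖ = 1 := by
          simp [Complex.norm_exp, Complex.mul_re]
        have h2 : ‖Complex.exp (((s * p.1 * p.2 : ℝ) : ℂ) * Complex.I) * ψ p.2‖ = ‖ψ p.2‖ := by
          rw [norm_mul, h1, one_mul]
        rw [Function.uncurry_apply_pair, norm_mul, h2]
    have swap := MeasureTheory.integral_integral_swap hInt
    have hL : ∀ σ : ℝ, (∫ x : ℝ, ((σ:ℂ) ^ k * Complex.exp (-((ε:ℂ) * σ))) *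
          (Complex.exp (((s * σ * x : ℝ) : ℂ) * Complex.I) * ψ x))
        = ((σ:ℂ) ^ k * Complex.exp (-((ε:ℂ) * σ))) * J σ := by
      intro σ
      rw [integral_const_mul, hJa]
    have hR : ∀ x : ℝ, (∫ σ in Set.Ioi (0:ℝ), ((σ:ℂ) ^ k * Complex.exp (-((ε:ℂ) * σ))) *
          (Complex.exp (((s * σ * x : ℝ) : ℂ) * Complex.I) * ψ x))
        = ((k.factorial : ℂ) / ((ε:ℂ) - (s:ℂ) * Complex.I * x) ^ (k+1)) * ψ x := by
      intro x
      have hptw : ∀ σ : ℝ, ((σ:ℂ) ^ k * Complex.exp (-((ε:ℂ) * σ))) *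
            (Complex.exp (((s * σ * x : ℝ) : ℂ) * Complex.I) * ψ x)
          = ((σ:ℂ) ^ k * Complex.exp (-(((ε:ℂ) - (s:ℂ) * Complex.I * x) * σ))) * ψ x := by
        intro σ
        have hexp : Complex.exp (-((ε:ℂ) * σ)) * Complex.exp (((s * σ * x : ℝ) : ℂ) * Complex.I)
            = Complex.exp (-(((ε:ℂ) - (s:ℂ) * Complex.I * x) * σ)) := by
          rw [← Complex.exp_add]
          congr 1
          push_cast
          ring
        rw [← hexp]
        ring
      simp only [hptw]
      rw [integral_mul_const, integral_pow_exp k _ (hapos x)]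
    have hax : ∀ x : ℝ, ((k.factorial : ℂ) / ((ε:ℂ) - (s:ℂ) * Complex.I * x) ^ (k+1)) * ψ x
        = c ^ (k+1) * (k.factorial : ℂ) *
          (ψ x * ((x : ℂ) + ((s * ε : ℝ) : ℂ) * Complex.I)⁻¹ ^ (k + 1)) := by
      intro x
      have hfact : ((ε:ℂ) - (s:ℂ) * Complex.I * x)
          = (-c) * ((x : ℂ) + ((s * ε : ℝ) : ℂ) * Complex.I) := by
        rw [hc]
        push_cast
        linear_combination (-(ε:ℂ)) * hs2 + ((s:ℂ) * (s:ℂ) * (ε:ℂ)) * Complex.I_mul_I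
      have hcinv : (-c)⁻¹ = c := inv_eq_of_mul_eq_one_right hc1
      have hinv : ((ε:ℂ) - (s:ℂ) * Complex.I * x)⁻¹
          = c * ((x : ℂ) + ((s * ε : ℝ) : ℂ) * Complex.I)⁻¹ := by
        rw [hfact, mul_inv, hcinv]
      rw [div_eq_mul_inv, ← inv_pow, hinv, mul_pow]
      ring
    calc (∫ σ in Set.Ioi (0:ℝ), ((σ:ℂ) ^ k * Complex.exp (-((ε:ℂ) * σ))) * J σ)
        = ∫ σ in Set.Ioi (0:ℝ), ∫ x : ℝ, ((σ:ℂ) ^ k * Complex.exp (-((ε:ℂ) * σ))) *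
            (Complex.exp (((s * σ * x : ℝ) : ℂ) * Complex.I) * ψ x) := by
          simp only [hL]
      _ = ∫ x : ℝ, ∫ σ in Set.Ioi (0:ℝ), ((σ:ℂ) ^ k * Complex.exp (-((ε:ℂ) * σ))) *
            (Complex.exp (((s * σ * x : ℝ) : ℂ) * Complex.I) * ψ x) := swap
      _ = ∫ x : ℝ, ((k.factorial : ℂ) / ((ε:ℂ) - (s:ℂ) * Complex.I * x) ^ (k+1)) * ψ x := by
          simp only [hR]
      _ = ∫ x : ℝ, c ^ (k+1) * (k.factorial : ℂ) *
            (ψ x * ((x : ℂ) + ((s * ε : ℝ) : ℂ) * Complex.I)⁻¹ ^ (k + 1)) := by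
          simp only [hax]
      _ = c ^ (k+1) * (k.factorial : ℂ) *
            ∫ x : ℝ, ψ x * ((x : ℂ) + ((s * ε : ℝ) : ℂ) * Complex.I)⁻¹ ^ (k + 1) :=
          integral_const_mul _ _
  -- dominated convergence
  have hDCT : Tendsto (fun ε : ℝ =>
        ∫ σ in Set.Ioi (0:ℝ), ((σ:ℂ) ^ k * Complex.exp (-((ε:ℂ) * σ))) * J σ)
      (𝓝[>] 0) (𝓝 (∫ σ in Set.Ioi (0:ℝ), (σ:ℂ) ^ k * J σ)) := by
    refine tendsto_integral_filter_of_dominated_convergence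
      (fun σ => ‖(σ:ℂ) ^ k * J σ‖) ?_ ?_ hJint.norm ?_
    · filter_upwards with ε
      exact (((Complex.continuous_ofReal.pow k).mul
        (Complex.continuous_exp.comp
          ((continuous_const.mul Complex.continuous_ofReal).neg))).mul
            hJcont).aestronglyMeasurable
    · filter_upwards [self_mem_nhdsWithin] with ε (hε : 0 < ε)
      filter_upwards [ae_restrict_mem measurableSet_Ioi] with σ (hσ : 0 < σ)
      have hre : (-((ε:ℂ) * σ)).re = -(ε * σ) := by simp [Complex.mul_re]
      have h1 : ‖Complex.exp (-((ε:ℂ) * σ))‖ ≤ 1 := by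
        rw [Complex.norm_exp, hre]
        simpa using Real.exp_le_exp.mpr (show -(ε * σ) ≤ 0 by nlinarith)
      rw [norm_mul, norm_mul, norm_mul]
      exact mul_le_mul_of_nonneg_right
        (mul_le_of_le_one_right (norm_nonneg _) h1) (norm_nonneg _)
    · filter_upwards with σ
      have hcont : Continuous fun ε : ℝ => ((σ:ℂ) ^ k * Complex.exp (-((ε:ℂ) * σ))) * J σ :=
        (continuous_const.mul (Complex.continuous_exp.comp
          ((Complex.continuous_ofReal.mul continuous_const).neg))).mul continuous_const
      have h := (hcont.tendsto 0).mono_left (nhdsWithin_le_nhds (s := Set.Ioi (0:ℝ)))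
      simpa using h
  refine ⟨hJint, (c ^ (k+1) * (k.factorial : ℂ))⁻¹ * ∫ σ in Set.Ioi (0:ℝ), (σ:ℂ) ^ k * J σ,
    ?_, ?_⟩
  · refine Tendsto.congr' ?_ (tendsto_const_nhds.mul hDCT)
    filter_upwards [self_mem_nhdsWithin] with ε (hε : 0 < ε)
    rw [key ε hε]
    exact inv_mul_cancel_left₀ hCne _
  · rw [mul_inv_cancel_left₀ hCne]
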